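/- Let d ≥ 1, E = EuclideanSpace ℝ (Fin d), and let v : Fin (d+1) → E be affinely independent. Then Σ_{i : Fin (d+1)} μH^{d-1}(F i) • n i = 0, where F i = convexHull ℝ {v j | j ≠ i} is the i-th facet, n i is its inner unit normal, and μH^{d-1} is the (d-1)-dimensional Hausdorff measure on E. -/

import Mathlib

open Matrix Set MeasureTheory Module
open scoped RealInnerProductSpace MeasureTheory
set_option maxHeartbeats 1000000

namespace SMaux

/-- the corner simplex: convex hull of 0 and the standard basis vectors -/
noncomputable def stdSpx (e : ℕ) : Set (EuclideanSpace ℝ (Fin e)) :=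
  convexHull ℝ (Set.range (Fin.cons 0
    (fun m => EuclideanSpace.single m 1) : Fin (e+1) → EuclideanSpace ℝ (Fin e)))

variable {e : ℕ}

def liftMat (v : Fin (e+2) → EuclideanSpace ℝ (Fin (e+1))) : Matrix (Fin (e+2)) (Fin (e+2)) ℝ :=
  Matrix.of fun r c => (Fin.cons (1:ℝ) (fun s => v c s) : Fin (e+2) → ℝ) r

lemma abs_det_edge (v : Fin (e+2) → EuclideanSpace ℝ (Fin (e+1))) (τ : Equiv.Perm (Fin (e+2))) :
    |Matrix.det (Matrix.of fun (r m : Fin (e+1)) =>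
      (v (τ (Fin.castSucc m)) - v (τ (Fin.last (e+1)))) r)| = |Matrix.det (liftMat v)| := by
  classical
  set N : Matrix (Fin (e+2)) (Fin (e+2)) ℝ := (liftMat v).submatrix id τ with hN
  have hNdet : |N.det| = |(liftMat v).det| := by
    rw [hN, Matrix.det_permute' τ (liftMat v), abs_mul]
    rcases Int.units_eq_one_or (Equiv.Perm.sign τ) with h | h <;> simp [h]
  -- column operations
  set L2 : Matrix (Fin (e+2)) (Fin (e+2)) ℝ :=
    Matrix.of fun j c => if j = Fin.last (e+1) ∧ c ≠ Fin.last (e+1) then -1 else 0 with hL2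
  set L : Matrix (Fin (e+2)) (Fin (e+2)) ℝ := 1 + L2 with hL
  have hLdet : L.det = 1 := by
    have : L.det = ∏ i : Fin (e+2), L i i := by
      apply Matrix.det_of_lowerTriangular
      intro i j hij
      have h1 : i ≠ j := by
        intro h; subst h; exact lt_irrefl _ hij
      have h2 : i ≠ Fin.last (e+1) := by
        intro h; subst h
        exact absurd hij (not_lt.2 (Fin.le_last j))
      simp [hL, hL2, Matrix.one_apply, h1, h2]
    rw [this]
    apply Finset.prod_eq_one
    intro i _
    simp [hL, hL2, Matrix.one_apply]
  set P := N * L with hP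
  have hPdet : P.det = N.det := by rw [hP, Matrix.det_mul, hLdet, mul_one]
  have hPentry : ∀ r c, P r c = if c = Fin.last (e+1) then N r (Fin.last (e+1))
      else N r c - N r (Fin.last (e+1)) := by
    intro r c
    have : P r c = N r c + ∑ j, N r j * L2 j c := by
      simp [hP, hL, Matrix.mul_apply, Matrix.add_apply, mul_add, Finset.sum_add_distrib,
        Matrix.one_apply, Finset.sum_ite_eq', mul_comm]
    rw [this]
    rcases eq_or_ne c (Fin.last (e+1)) with hc | hc
    · simp [hc, hL2]
    · have : ∑ j, N r j * L2 j c = -N r (Fin.last (e+1)) := by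
        rw [Finset.sum_eq_single (Fin.last (e+1))]
        · simp [hL2, hc]
        · intro b _ hb; simp [hL2, hb]
        · simp
      rw [this, if_neg hc]
      ring
  -- expand along the first row
  have hProw0 : ∀ c, P 0 c = if c = Fin.last (e+1) then 1 else 0 := by
    intro c
    have hN0 : ∀ j, N 0 j = 1 := by
      intro j
      simp [hN, liftMat]
    rw [hPentry 0 c, hN0, hN0]
    split <;> simp
  have hexp := Matrix.det_succ_row_zero P
  rw [Finset.sum_eq_single (Fin.last (e+1))] at hexp
  rotate_left
  · intro b _ hb; rw [hProw0 b, if_neg hb]; ring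
  · simp
  rw [hProw0, if_pos rfl, Fin.succAbove_last] at hexp
  have hminor : P.submatrix Fin.succ Fin.castSucc =
      Matrix.of fun (r m : Fin (e+1)) =>
        (v (τ (Fin.castSucc m)) - v (τ (Fin.last (e+1)))) r := by
    ext r m
    have hm : Fin.castSucc m ≠ Fin.last (e+1) := (Fin.castSucc_lt_last m).ne
    simp only [Matrix.submatrix_apply, hPentry, if_neg hm]
    have h1 : ∀ c, N r.succ c = v (τ c) r := by
      intro c; simp [hN, liftMat]
    simp [h1, Matrix.of_apply, PiLp.sub_apply]
  rw [hminor] at hexp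
  rw [← hNdet, ← hPdet, hexp]
  rw [abs_mul, abs_mul]
  simp


lemma edges_linearIndependent (v : Fin (e+2) → EuclideanSpace ℝ (Fin (e+1)))
    (hv : AffineIndependent ℝ v) (i : Fin (e+2)) :
    LinearIndependent ℝ (fun m : Fin e =>
      v (i.succAbove m.succ) - v (i.succAbove 0)) := by
  have haff : AffineIndependent ℝ (fun m : Fin (e+1) => v (i.succAbove m)) :=
    hv.comp_embedding i.succAboveEmb
  have hli := (affineIndependent_iff_linearIndependent_vsub ℝ
    (fun m : Fin (e+1) => v (i.succAbove m)) 0).1 haff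
  have := hli.comp (fun m : Fin e => (⟨m.succ, Fin.succ_ne_zero m⟩ : {x : Fin (e+1) // x ≠ 0}))
    (fun a b hab => by
      simpa [Fin.succ_inj] using congrArg (fun x : {x : Fin (e+1) // x ≠ 0} => x.1) hab)
  simpa [vsub_eq_sub, Function.comp_def] using this

lemma mem_orthogonal_span_edges (i : Fin (e+2)) (v : Fin (e+2) → EuclideanSpace ℝ (Fin (e+1)))
    (x : EuclideanSpace ℝ (Fin (e+1)))
    (hx : ∀ j, j ≠ i → ∀ k, k ≠ i → ⟪x, v j - v k⟫ = (0:ℝ)) :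
    x ∈ (Submodule.span ℝ (Set.range (fun m : Fin e =>
      v (i.succAbove m.succ) - v (i.succAbove 0))))ᗮ := by
  rw [Submodule.mem_orthogonal]
  intro y hy
  induction hy using Submodule.span_induction with
  | mem z hz =>
      obtain ⟨m, rfl⟩ := hz
      rw [real_inner_comm]
      exact hx _ (Fin.succAbove_ne i _) _ (Fin.succAbove_ne i _)
  | zero => simp
  | add a b _ _ ha hb => rw [inner_add_left, ha, hb, add_zero]
  | smul c a _ ha => rw [inner_smul_left, ha, mul_zero]

lemma normal_eq (v : Fin (e+2) → EuclideanSpace ℝ (Fin (e+1)))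
    (hv : AffineIndependent ℝ v) (i : Fin (e+2))
    (n g : EuclideanSpace ℝ (Fin (e+1)))
    (hunit : ‖n‖ = 1)
    (horth : ∀ j, j ≠ i → ∀ k, k ≠ i → ⟪n, v j - v k⟫ = (0:ℝ))
    (hinner : ∀ j, j ≠ i → (0:ℝ) < ⟪n, v i - v j⟫)
    (hg0 : ∀ j, j ≠ i → ∀ k, k ≠ i → ⟪g, v j - v k⟫ = (0:ℝ))
    (hg1 : ∀ k, k ≠ i → ⟪g, v i - v k⟫ = (1:ℝ)) :
    n = ‖g‖⁻¹ • g := by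
  classical
  set u : Fin e → EuclideanSpace ℝ (Fin (e+1)) :=
    fun m => v (i.succAbove m.succ) - v (i.succAbove 0) with hu_def
  have hu : LinearIndependent ℝ u := edges_linearIndependent v hv i
  set W := Submodule.span ℝ (Set.range u) with hW_def
  have hk₀ : i.succAbove 0 ≠ i := Fin.succAbove_ne i 0
  have hgne : g ≠ 0 := by
    intro h
    have := hg1 _ hk₀
    rw [h] at this
    simp at this
  have hWrank : Module.finrank ℝ W = e := by
    rw [hW_def, finrank_span_eq_card hu, Fintype.card_fin]
  have hnW : n ∈ Wᗮ := mem_orthogonal_span_edges i v n horth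
  have hgW : g ∈ Wᗮ := mem_orthogonal_span_edges i v g hg0
  have hrankperp : Module.finrank ℝ (Wᗮ : Submodule ℝ _) = 1 := by
    have := Submodule.finrank_add_finrank_orthogonal W
    rw [hWrank, finrank_euclideanSpace_fin] at this
    omega
  have hspan : Submodule.span ℝ {g} = Wᗮ := by
    apply Submodule.eq_of_le_of_finrank_eq
    · rw [Submodule.span_le, Set.singleton_subset_iff]; exact hgW
    · rw [finrank_span_singleton hgne, hrankperp]
  have hn : n ∈ Submodule.span ℝ {g} := hspan ▸ hnW
  obtain ⟨a, rfl⟩ := Submodule.mem_span_singleton.1 hn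
  have hag : ⟪a • g, v i - v (i.succAbove 0)⟫ = a := by
    rw [inner_smul_left, hg1 _ hk₀]
    simp
  have ha : 0 < a := by
    have := hinner _ hk₀
    rwa [hag] at this
  have : a * ‖g‖ = 1 := by
    rw [norm_smul, Real.norm_eq_abs, abs_of_pos ha] at hunit
    exact hunit
  have hgnorm : ‖g‖ ≠ 0 := norm_ne_zero_iff.2 hgne
  have : a = ‖g‖⁻¹ := by field_simp at this ⊢; linarith
  rw [this]


instance hausdorff_addHaar (e : ℕ) :
    ((μH[(e:ℝ)]) : Measure (EuclideanSpace ℝ (Fin e))).IsAddHaarMeasure := by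
  have h := MeasureTheory.isAddHaarMeasure_hausdorffMeasure
    (E := EuclideanSpace ℝ (Fin e))
  rwa [finrank_euclideanSpace_fin] at h

lemma facet_measure (v : Fin (e+2) → EuclideanSpace ℝ (Fin (e+1)))
    (hv : AffineIndependent ℝ v) (i : Fin (e+2)) (g : EuclideanSpace ℝ (Fin (e+1)))
    (hg0 : ∀ j, j ≠ i → ∀ k, k ≠ i → ⟪g, v j - v k⟫ = (0:ℝ))
    (hg1 : ∀ k, k ≠ i → ⟪g, v i - v k⟫ = (1:ℝ)) :
    μH[(e : ℝ)] (convexHull ℝ (v '' {j | j ≠ i}))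
      = ENNReal.ofReal (|(liftMat v).det| * ‖g‖) * μH[(e : ℝ)] (stdSpx e) := by
  classical
  set w : Fin (e+1) → EuclideanSpace ℝ (Fin (e+1)) := fun m => v (i.succAbove m) with hw_def
  set u : Fin e → EuclideanSpace ℝ (Fin (e+1)) := fun m => w m.succ - w 0 with hu_def
  have hu : LinearIndependent ℝ u := edges_linearIndependent v hv i
  set W := Submodule.span ℝ (Set.range u) with hW_def
  have hWrank : Module.finrank ℝ W = e := by
    rw [hW_def, finrank_span_eq_card hu, Fintype.card_fin]
  set β : OrthonormalBasis (Fin e) ℝ W :=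
    (stdOrthonormalBasis ℝ W).reindex (finCongr hWrank) with hβ_def
  have hmem : ∀ m : Fin (e+1), w m - w 0 ∈ W := by
    intro m
    induction m using Fin.cases with
    | zero => simp
    | succ m' => exact Submodule.subset_span ⟨m', rfl⟩
  set u' : Fin (e+1) → W := fun m => ⟨w m - w 0, hmem m⟩ with hu'_def
  set y : Fin (e+1) → EuclideanSpace ℝ (Fin e) := fun m => β.repr (u' m) with hy_def
  set T : Matrix (Fin e) (Fin e) ℝ := Matrix.of fun r m' => y m'.succ r with hT_def
  set Tlin : EuclideanSpace ℝ (Fin e) →ₗ[ℝ] EuclideanSpace ℝ (Fin e) :=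
    Matrix.toEuclideanLin T with hTlin_def
  -- the determinant identity (the geometric heart)
  have hk₀ : i.succAbove 0 ≠ i := Fin.succAbove_ne i 0
  have hgne : g ≠ 0 := by
    intro h
    have := hg1 _ hk₀
    rw [h] at this
    simp at this
  have hgnorm : ‖g‖ ≠ 0 := norm_ne_zero_iff.2 hgne
  have hgW : g ∈ Wᗮ := mem_orthogonal_span_edges i v g hg0
  set u₀ : EuclideanSpace ℝ (Fin (e+1)) := ‖g‖⁻¹ • g with hu₀_def
  have hu₀W : u₀ ∈ Wᗮ := Submodule.smul_mem _ _ hgW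
  have hu₀ne : u₀ ≠ 0 := smul_ne_zero (inv_ne_zero hgnorm) hgne
  set γfam : Fin (e+1) → EuclideanSpace ℝ (Fin (e+1)) :=
    Fin.snoc (fun m => ((β m : W) : EuclideanSpace ℝ (Fin (e+1)))) u₀ with hγfam_def
  have hβmem : ∀ m : Fin e, ((β m : W) : EuclideanSpace ℝ (Fin (e+1))) ∈ W :=
    fun m => (β m).2
  have honγ : Orthonormal ℝ γfam := by
    rw [orthonormal_iff_ite]
    have hββ := orthonormal_iff_ite.1 β.orthonormal
    have hβu₀ : ∀ m : Fin e, ⟪((β m : W) : EuclideanSpace ℝ (Fin (e+1))), u₀⟫ = (0:ℝ) :=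
      fun m => (Submodule.mem_orthogonal W u₀).1 hu₀W _ (hβmem m)
    have hu₀u₀ : ⟪u₀, u₀⟫ = (1:ℝ) := by
      rw [hu₀_def, real_inner_smul_left, real_inner_smul_right,
        real_inner_self_eq_norm_mul_norm]
      field_simp
    intro a b
    induction a using Fin.lastCases with
    | last =>
        induction b using Fin.lastCases with
        | last => simpa [hγfam_def, Fin.snoc_last] using hu₀u₀
        | cast m =>
            have hne : Fin.last e ≠ m.castSucc := (Fin.castSucc_lt_last m).ne'
            simp only [hγfam_def, Fin.snoc_last, Fin.snoc_castSucc, if_neg hne]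
            rw [real_inner_comm]
            exact hβu₀ m
    | cast m =>
        induction b using Fin.lastCases with
        | last =>
            have hne : m.castSucc ≠ Fin.last e := (Fin.castSucc_lt_last m).ne
            simp only [hγfam_def, Fin.snoc_last, Fin.snoc_castSucc, if_neg hne]
            exact hβu₀ m
        | cast m' =>
            simp only [hγfam_def, Fin.snoc_castSucc]
            rw [← Submodule.coe_inner, hββ m m']
            simp [Fin.castSucc_inj]
  have hWval : Submodule.span ℝ
      (Set.range (fun m => ((β m : W) : EuclideanSpace ℝ (Fin (e+1))))) = W := by
    have h1 := β.toBasis.span_eq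
    have h2 := congrArg (Submodule.map W.subtype) h1
    rwa [Submodule.map_span, Submodule.map_subtype_top, ← Set.range_comp,
      OrthonormalBasis.coe_toBasis] at h2
  have hrankperp : Module.finrank ℝ (Wᗮ : Submodule ℝ _) = 1 := by
    have := Submodule.finrank_add_finrank_orthogonal W
    rw [hWrank, finrank_euclideanSpace_fin] at this
    omega
  have hperp : Wᗮ = Submodule.span ℝ {u₀} := by
    refine (Submodule.eq_of_le_of_finrank_eq ?_ ?_).symm
    · rw [Submodule.span_le, Set.singleton_subset_iff]; exact hu₀W
    · rw [finrank_span_singleton hu₀ne, hrankperp]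
  have hspanγ : ⊤ ≤ Submodule.span ℝ (Set.range γfam) := by
    rw [← Submodule.sup_orthogonal_of_hasOrthogonalProjection (K := W)]
    apply sup_le
    · rw [← hWval]
      apply Submodule.span_mono
      rintro x ⟨m, rfl⟩
      exact ⟨m.castSucc, by simp [hγfam_def, Fin.snoc_castSucc]⟩
    · rw [hperp, Submodule.span_le, Set.singleton_subset_iff]
      exact Submodule.subset_span ⟨Fin.last e, by simp [hγfam_def, Fin.snoc_last]⟩
  set γ : OrthonormalBasis (Fin (e+1)) ℝ (EuclideanSpace ℝ (Fin (e+1))) :=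
    OrthonormalBasis.mk honγ hspanγ with hγ_def
  have hγcoe : ⇑γ = γfam := OrthonormalBasis.coe_mk honγ hspanγ
  -- the permutation of indices
  set σfam : Fin (e+1) → Fin (e+2) :=
    Fin.snoc (fun m : Fin e => i.succAbove m.succ) i with hσfam_def
  set τfam : Fin (e+2) → Fin (e+2) := Fin.snoc σfam (i.succAbove 0) with hτfam_def
  have hτsurj : Function.Surjective τfam := by
    intro j
    rcases eq_or_ne j i with rfl | hj
    · refine ⟨(Fin.last e).castSucc, ?_⟩
      simp [hτfam_def, hσfam_def, Fin.snoc_castSucc, Fin.snoc_last]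
    · have : j ∈ Set.range i.succAbove := by
        rw [Fin.range_succAbove]; exact hj
      obtain ⟨m, rfl⟩ := this
      induction m using Fin.cases with
      | zero => exact ⟨Fin.last (e+1), by simp [hτfam_def, Fin.snoc_last]⟩
      | succ m' =>
          refine ⟨(m'.castSucc).castSucc, ?_⟩
          simp [hτfam_def, hσfam_def, Fin.snoc_castSucc]
  have hτbij : Function.Bijective τfam := Finite.surjective_iff_bijective.1 hτsurj
  set τ : Equiv.Perm (Fin (e+2)) := Equiv.ofBijective τfam hτbij with hτ_def
  have hτc : ∀ c, τ c = τfam c := fun c => rfl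
  have hτlast : τ (Fin.last (e+1)) = i.succAbove 0 := by
    rw [hτc, hτfam_def]; simp [Fin.snoc_last]
  -- the edge family
  set A : Fin (e+1) → EuclideanSpace ℝ (Fin (e+1)) :=
    Fin.snoc u (v i - v (i.succAbove 0)) with hA_def
  have hA : ∀ m, A m = v (τ m.castSucc) - v (τ (Fin.last (e+1))) := by
    intro m
    rw [hτlast]
    induction m using Fin.lastCases with
    | last =>
        have : τ (Fin.last e).castSucc = i := by
          rw [hτc, hτfam_def]; simp [Fin.snoc_castSucc, hσfam_def, Fin.snoc_last]
        rw [this, hA_def]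
        simp [Fin.snoc_last]
    | cast m' =>
        have : τ (m'.castSucc).castSucc = i.succAbove m'.succ := by
          rw [hτc, hτfam_def]; simp [Fin.snoc_castSucc, hσfam_def]
        rw [this, hA_def]
        simp [Fin.snoc_castSucc, hu_def, hw_def]
  set stdB := EuclideanSpace.basisFun (Fin (e+1)) ℝ with hstdB_def
  have hM₁ : stdB.toBasis.toMatrix A = Matrix.of fun (r m : Fin (e+1)) =>
      (v (τ (Fin.castSucc m)) - v (τ (Fin.last (e+1)))) r := by
    ext r m
    rw [Basis.toMatrix_apply, hA]
    simp [hstdB_def, EuclideanSpace.basisFun_toBasis]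
  have habs1 : |(stdB.toBasis.toMatrix A).det| = |(liftMat v).det| := by
    rw [hM₁]; exact abs_det_edge v τ
  set M₂ := γ.toBasis.toMatrix A with hM₂_def
  have hfact : stdB.toBasis.toMatrix A = stdB.toBasis.toMatrix ⇑γ.toBasis * M₂ :=
    (Basis.toMatrix_mul_toMatrix stdB.toBasis γ.toBasis A).symm
  have habsP : |(stdB.toBasis.toMatrix ⇑γ.toBasis).det| = 1 := by
    have h1 := OrthonormalBasis.det_to_matrix_orthonormalBasis_real stdB γ
    rw [Basis.det_apply] at h1
    rw [OrthonormalBasis.coe_toBasis]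
    rcases h1 with h | h <;> rw [h] <;> norm_num
  have hM₂e : ∀ r m, M₂ r m = ⟪γ r, A m⟫ := by
    intro r m
    rw [hM₂_def, Basis.toMatrix_apply, OrthonormalBasis.coe_toBasis_repr_apply,
      OrthonormalBasis.repr_apply_apply]
  have hlastrow0 : ∀ m' : Fin e, M₂ (Fin.last e) m'.castSucc = 0 := by
    intro m'
    rw [hM₂e, hγcoe, hγfam_def]
    simp only [Fin.snoc_last, hA_def, Fin.snoc_castSucc]
    rw [hu₀_def, real_inner_smul_left]
    have : ⟪g, u m'⟫ = (0:ℝ) := by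
      rw [hu_def, hw_def]
      exact hg0 _ (Fin.succAbove_ne i _) _ (Fin.succAbove_ne i _)
    rw [this, mul_zero]
  have hlastlast : M₂ (Fin.last e) (Fin.last e) = ‖g‖⁻¹ := by
    rw [hM₂e, hγcoe, hγfam_def]
    simp only [Fin.snoc_last, hA_def]
    rw [hu₀_def, real_inner_smul_left, hg1 _ hk₀, mul_one]
  have hminor : M₂.submatrix (Fin.last e).succAbove (Fin.last e).succAbove = T := by
    rw [Fin.succAbove_last]
    ext r m
    rw [Matrix.submatrix_apply, hM₂e, hγcoe, hγfam_def]
    simp only [Fin.snoc_castSucc, hA_def]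
    have h0 : T r m = (⟪β r, u' m.succ⟫ : ℝ) :=
      OrthonormalBasis.repr_apply_apply β (u' m.succ) r
    have h1 : (⟪β r, u' m.succ⟫ : ℝ)
        = ⟪((β r : W) : EuclideanSpace ℝ (Fin (e+1))), w m.succ - w 0⟫ :=
      Submodule.coe_inner W (β r) (u' m.succ)
    rw [h0, h1]
  have hdetM₂ : M₂.det = ‖g‖⁻¹ * T.det := by
    rw [Matrix.det_succ_row M₂ (Fin.last e)]
    rw [Finset.sum_eq_single (Fin.last e)]
    · rw [hlastlast, hminor]
      have hpow : ((-1:ℝ)) ^ ((Fin.last e : ℕ) + (Fin.last e : ℕ)) = 1 :=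
        Even.neg_one_pow ⟨(Fin.last e : ℕ), rfl⟩
      rw [hpow, one_mul]
    · intro b _ hb
      obtain ⟨b', rfl⟩ := Fin.exists_castSucc_eq.2 hb
      rw [hlastrow0 b']
      ring
    · simp
  have hdet : |T.det| = |(liftMat v).det| * ‖g‖ := by
    have h2 : |M₂.det| = ‖g‖⁻¹ * |T.det| := by
      rw [hdetM₂, abs_mul, abs_of_nonneg (by positivity : (0:ℝ) ≤ ‖g‖⁻¹)]
    have h3 : |(stdB.toBasis.toMatrix A).det| = ‖g‖⁻¹ * |T.det| := by
      rw [hfact, Matrix.det_mul, abs_mul, habsP, one_mul, h2]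
    rw [habs1] at h3
    field_simp at h3 ⊢
    linarith
  -- the measure chain
  have h₁ : v '' {j | j ≠ i} = Set.range w := by
    have : {j | j ≠ i} = Set.range i.succAbove := by
      rw [Fin.range_succAbove]; rfl
    rw [this, ← Set.range_comp]; rfl
  have step1 : μH[(e : ℝ)] (convexHull ℝ (Set.range w))
      = μH[(e : ℝ)] (convexHull ℝ (Set.range (fun m => w m - w 0))) := by
    have himg : ⇑(IsometryEquiv.constVAdd (-(w 0))
        (X := EuclideanSpace ℝ (Fin (e+1)))) '' (convexHull ℝ (Set.range w))
        = convexHull ℝ (Set.range (fun m => w m - w 0)) := by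
      have := (AffineEquiv.constVAdd ℝ (EuclideanSpace ℝ (Fin (e+1)))
        (-(w 0))).toAffineMap.image_convexHull (Set.range w)
      have hco : ⇑(AffineEquiv.constVAdd ℝ (EuclideanSpace ℝ (Fin (e+1)))
          (-(w 0))).toAffineMap = ⇑(IsometryEquiv.constVAdd (-(w 0))
        (X := EuclideanSpace ℝ (Fin (e+1)))) := rfl
      rw [hco] at this
      rw [this, ← Set.range_comp]
      congr 1
      ext x
      constructor
      · rintro ⟨m, rfl⟩; exact ⟨m, by simp [sub_eq_neg_add]⟩
      · rintro ⟨m, rfl⟩; exact ⟨m, by simp [sub_eq_neg_add]⟩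
    rw [← himg]
    exact ((IsometryEquiv.constVAdd (-(w 0))
      (X := EuclideanSpace ℝ (Fin (e+1)))).hausdorffMeasure_image _ _).symm
  have step2 : μH[(e : ℝ)] (convexHull ℝ (Set.range (fun m => w m - w 0)))
      = μH[(e : ℝ)] (convexHull ℝ (Set.range u') : Set W) := by
    have himg : (Subtype.val : W → EuclideanSpace ℝ (Fin (e+1))) ''
        (convexHull ℝ (Set.range u'))
        = convexHull ℝ (Set.range (fun m => w m - w 0)) := by
      have := W.subtype.image_convexHull (Set.range u')
      have hco : ⇑W.subtype = (Subtype.val : W → EuclideanSpace ℝ (Fin (e+1))) := rfl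
      rw [hco] at this
      rw [this, ← Set.range_comp]
      rfl
    rw [← himg]
    exact isometry_subtype_coe.hausdorffMeasure_image (Or.inl (by positivity)) _
  have step3 : μH[(e : ℝ)] (convexHull ℝ (Set.range u') : Set W)
      = μH[(e : ℝ)] (convexHull ℝ (Set.range y)) := by
    have himg : ⇑β.repr.toIsometryEquiv '' (convexHull ℝ (Set.range u'))
        = convexHull ℝ (Set.range y) := by
      have := β.repr.toLinearEquiv.toLinearMap.image_convexHull (Set.range u')
      have hco : ⇑β.repr.toLinearEquiv.toLinearMap = ⇑β.repr.toIsometryEquiv := rfl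
      rw [hco] at this
      rw [this, ← Set.range_comp]
      rfl
    rw [← himg]
    exact (β.repr.toIsometryEquiv.hausdorffMeasure_image _ _).symm
  have step4 : convexHull ℝ (Set.range y) = Tlin '' stdSpx e := by
    have hyz : (⇑Tlin ∘ (Fin.cons 0
        (fun m => EuclideanSpace.single m 1) : Fin (e+1) → EuclideanSpace ℝ (Fin e))) = y := by
      funext m
      induction m using Fin.cases with
      | zero =>
          have hu'0 : u' 0 = 0 := by
            apply Subtype.ext; simp [hu'_def]
          simp only [Function.comp_apply, Fin.cons_zero, map_zero, hy_def, hu'0]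
      | succ m' =>
          apply PiLp.ext
          intro r
          simp only [Function.comp_apply, Fin.cons_succ, hTlin_def,
            Matrix.toEuclideanLin_apply]
          have h5 : (T *ᵥ (EuclideanSpace.single m' 1).ofLp) r
              = T r m' := by
            simp [Matrix.mulVec, dotProduct, EuclideanSpace.single_apply]
          rw [h5]
          rfl
    rw [stdSpx, Tlin.image_convexHull, ← Set.range_comp, hyz]
  have step5 : μH[(e : ℝ)] (Tlin '' stdSpx e)
      = ENNReal.ofReal (|LinearMap.det Tlin| * 1) * μH[(e : ℝ)] (stdSpx e) := by
    rw [mul_one]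
    exact Measure.addHaar_image_linearMap _ Tlin (stdSpx e)
  have hdet2 : LinearMap.det Tlin = T.det := by
    rw [hTlin_def, Matrix.toEuclideanLin_eq_toLin, LinearMap.det_toLin]
  rw [h₁, step1, step2, step3, step4, step5, hdet2, mul_one, hdet]

end SMaux

open SMaux in
/-- Minkowski's theorem for a `d`-simplex: if `v : Fin (d+1) → EuclideanSpace ℝ (Fin d)`
is affinely independent, `F i = convexHull ℝ {v j | j ≠ i}` are its facets and `n i` the inner
unit normals, then `Σ_i μH^{d-1}(F i) • n i = 0`. -/
theorem simplex_minkowski (d : ℕ) (hd : 1 ≤ d)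
    (v : Fin (d + 1) → EuclideanSpace ℝ (Fin d)) (hv : AffineIndependent ℝ v)
    (n : Fin (d + 1) → EuclideanSpace ℝ (Fin d))
    (hunit : ∀ i, ‖n i‖ = 1)
    (horth : ∀ i, ∀ j, j ≠ i → ∀ k, k ≠ i → ⟪n i, v j - v k⟫ = (0 : ℝ))
    (hinner : ∀ i, ∀ j, j ≠ i → (0 : ℝ) < ⟪n i, v i - v j⟫) :
    ∑ i : Fin (d + 1),
        (μH[(d : ℝ) - 1] (convexHull ℝ (v '' {j | j ≠ i}))).toReal • n i = 0 := by
  obtain ⟨e, rfl⟩ : ∃ e, d = e + 1 := ⟨d - 1, (Nat.succ_pred_eq_of_pos hd).symm⟩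
  have hind : ((e + 1 : ℕ) : ℝ) - 1 = (e : ℝ) := by push_cast; ring
  rw [hind]
  classical
  have htop : affineSpan ℝ (Set.range v) = ⊤ := by
    rw [hv.affineSpan_eq_top_iff_card_eq_finrank_add_one]
    simp [finrank_euclideanSpace_fin]
  set b : AffineBasis (Fin (e+2)) ℝ (EuclideanSpace ℝ (Fin (e+1))) := ⟨v, hv, htop⟩
    with hb_def
  have hb : ⇑b = v := rfl
  set g : Fin (e+2) → EuclideanSpace ℝ (Fin (e+1)) := fun i =>
    (InnerProductSpace.toDual ℝ _).symm
      (LinearMap.toContinuousLinearMap (b.coord i).linear) with hg_def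
  have hginner : ∀ (i : Fin (e+2)) x, ⟪g i, x⟫ = (b.coord i).linear x := by
    intro i x
    rw [hg_def]
    exact InnerProductSpace.toDual_symm_apply
  have hcoordv : ∀ i j, b.coord i (v j) = if i = j then (1:ℝ) else 0 := by
    intro i j
    rw [← hb]
    exact b.coord_apply i j
  have hgvv : ∀ i j k, ⟪g i, v j - v k⟫ = b.coord i (v j) - b.coord i (v k) := by
    intro i j k
    rw [hginner]
    have h := (b.coord i).linearMap_vsub (v j) (v k)
    simpa [vsub_eq_sub] using h
  have hg0 : ∀ i, ∀ j, j ≠ i → ∀ k, k ≠ i → ⟪g i, v j - v k⟫ = (0:ℝ) := by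
    intro i j hj k hk
    rw [hgvv, hcoordv, hcoordv, if_neg (Ne.symm hj), if_neg (Ne.symm hk), sub_zero]
  have hg1 : ∀ i, ∀ k, k ≠ i → ⟪g i, v i - v k⟫ = (1:ℝ) := by
    intro i k hk
    rw [hgvv, hcoordv, hcoordv, if_pos rfl, if_neg (Ne.symm hk), sub_zero]
  have hgsum : ∑ i, g i = 0 := by
    apply ext_inner_right ℝ
    intro x
    rw [sum_inner, inner_zero_left]
    have hlin : ∀ i : Fin (e+2), ⟪g i, x⟫
        = b.coord i (x +ᵥ v 0) - b.coord i (v 0) := by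
      intro i
      rw [hginner]
      have h := (b.coord i).map_vadd (v 0) x
      rw [h]
      simp
    rw [Finset.sum_congr rfl (fun i _ => hlin i), Finset.sum_sub_distrib,
      b.sum_coord_apply_eq_one, b.sum_coord_apply_eq_one, sub_self]
  have hnormals : ∀ i, n i = ‖g i‖⁻¹ • g i := fun i =>
    normal_eq v hv i (n i) (g i) (hunit i) (horth i) (hinner i) (hg0 i) (hg1 i)
  have hmeas : ∀ i, μH[(e:ℝ)] (convexHull ℝ (v '' {j | j ≠ i}))
      = ENNReal.ofReal (|(liftMat v).det| * ‖g i‖) * μH[(e:ℝ)] (stdSpx e) :=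
    fun i => facet_measure v hv i (g i) (hg0 i) (hg1 i)
  set κ := μH[(e:ℝ)] (stdSpx e) with hκ
  have hκfin : κ ≠ ⊤ := by
    have hcpt : IsCompact (stdSpx e) := (Set.finite_range _).isCompact_convexHull (𝕜 := ℝ)
    exact hcpt.measure_lt_top.ne
  have hterm : ∀ i, (μH[(e:ℝ)] (convexHull ℝ (v '' {j | j ≠ i}))).toReal • n i
      = (|(liftMat v).det| * κ.toReal) • g i := by
    intro i
    rw [hmeas i, hnormals i]
    have hgne : ‖g i‖ ≠ 0 := by
      intro h
      have h0 := hg1 i _ (Fin.succAbove_ne i 0)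
      rw [norm_eq_zero.1 h] at h0
      simp at h0
    rw [ENNReal.toReal_mul, ENNReal.toReal_ofReal (by positivity), smul_smul]
    congr 1
    field_simp
  rw [Finset.sum_congr rfl (fun i _ => hterm i), ← Finset.smul_sum, hgsum, smul_zero]
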